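/- Let g : [0, l] → ℂ be an arclength parametrization of a curve (|g'| = 1) whose derivative g' has modulus of continuity ω, i.e., |g'(s) − g'(t)| ≤ ω(|s − t|). Define 𝒦(s,t) = Re[conj(g(t) − g(s)) · i g'(s)]. Then |𝒦(s,t)| ≤ ∫₀^{|s−t|} ω(τ) dτ. -/

import Mathlib

open Complex

/-- Kernel estimate (Lemma 2.2): for an arclength parametrization `g` whose derivative
has modulus of continuity `ω`, the kernel `𝒦(s,t) = Re[conj(g(t)−g(s))·i g'(s)]`
satisfies `|𝒦(s,t)| ≤ ∫₀^{|s−t|} ω`. -/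
theorem stmt_9 (l : ℝ) (hl : 0 < l) (g g' : ℝ → ℂ) (ω : ℝ → ℝ)
    (hg : ∀ s ∈ Set.Icc (0:ℝ) l, HasDerivAt g (g' s) s)
    (hunit : ∀ s ∈ Set.Icc (0:ℝ) l, ‖g' s‖ = 1)
    (hωmono : MonotoneOn ω (Set.Icc (0:ℝ) l))
    (hω0 : ∀ t ∈ Set.Icc (0:ℝ) l, 0 ≤ ω t)
    (hmod : ∀ s ∈ Set.Icc (0:ℝ) l, ∀ t ∈ Set.Icc (0:ℝ) l,
      ‖g' s - g' t‖ ≤ ω |s - t|) :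
    ∀ s ∈ Set.Icc (0:ℝ) l, ∀ t ∈ Set.Icc (0:ℝ) l,
      |(((starRingEnd ℂ) (g t - g s)) * (Complex.I * g' s)).re| ≤
        ∫ τ in (0:ℝ)..|s - t|, ω τ := by
  intro s hs t ht
  set F : ℝ → ℝ := fun τ => (((starRingEnd ℂ) (g τ - g s)) * (Complex.I * g' s)).re with hFdef
  set F' : ℝ → ℝ := fun τ => (((starRingEnd ℂ) (g' τ)) * (Complex.I * g' s)).re with hF'def
  have hF0 : F s = 0 := by simp [hFdef]
  have hF' : ∀ τ ∈ Set.Icc (0:ℝ) l, HasDerivAt F (F' τ) τ := by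
    intro τ hτ
    have h1 : HasDerivAt (fun τ => g τ - g s) (g' τ) τ := (hg τ hτ).sub_const _
    have h2 := h1.star
    have h3 := h2.mul_const (Complex.I * g' s)
    have h4 := Complex.reCLM.hasFDerivAt.comp_hasDerivAt τ h3
    exact h4
  -- the key pointwise bound on F'
  have hbound : ∀ τ ∈ Set.Icc (0:ℝ) l, |F' τ| ≤ ω |τ - s| := by
    intro τ hτ
    have hzero : (((starRingEnd ℂ) (g' s)) * (Complex.I * g' s)).re = 0 := by
      simp [Complex.mul_re, Complex.mul_im]; ring
    have heq : F' τ = ((((starRingEnd ℂ) (g' τ - g' s))) * (Complex.I * g' s)).re := by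
      simp only [hF'def, map_sub, sub_mul, Complex.sub_re, hzero, sub_zero]
    rw [heq]
    calc |((((starRingEnd ℂ) (g' τ - g' s))) * (Complex.I * g' s)).re|
        ≤ ‖((starRingEnd ℂ) (g' τ - g' s)) * (Complex.I * g' s)‖ :=
          Complex.abs_re_le_norm _
      _ = ‖g' τ - g' s‖ * (‖Complex.I‖ * ‖g' s‖) := by
          rw [norm_mul, norm_mul, Complex.norm_conj]
      _ = ‖g' τ - g' s‖ := by
          rw [Complex.norm_I, hunit s hs]; ring
      _ ≤ ω |τ - s| := hmod τ hτ s hs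
  have hFcont : ContinuousOn F (Set.Icc (0:ℝ) l) :=
    fun x hx => (hF' x hx).continuousAt.continuousWithinAt
  rcases le_total s t with hst | hts
  · -- case s ≤ t
    have habs : |s - t| = t - s := by rw [abs_sub_comm]; exact abs_of_nonneg (by linarith)
    have hsub : Set.Icc s t ⊆ Set.Icc (0:ℝ) l :=
      Set.Icc_subset_Icc hs.1 ht.2
    have hmono : MonotoneOn (fun u => ω (u - s)) (Set.Icc s t) := by
      intro a ha b hb hab
      exact hωmono ⟨by linarith [ha.1], by linarith [ha.2, ht.2, hs.1]⟩
        ⟨by linarith [hb.1], by linarith [hb.2, ht.2, hs.1]⟩ (by linarith)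
    have hint : MeasureTheory.IntegrableOn (fun u => ω (u - s)) (Set.Icc s t) :=
      hmono.integrableOn_isCompact isCompact_Icc
    have hφ : ∀ x ∈ Set.Ioo s t, |F' x| ≤ (fun u => ω (u - s)) x := by
      intro x hx
      have hx' : x ∈ Set.Icc (0:ℝ) l := hsub ⟨hx.1.le, hx.2.le⟩
      have h := hbound x hx'
      show |F' x| ≤ ω (x - s)
      rwa [_root_.abs_of_nonneg (by linarith [hx.1] : (0:ℝ) ≤ x - s)] at h
    have hchg : (∫ u in s..t, ω (u - s)) = ∫ τ in (0:ℝ)..(t - s), ω τ := by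
      simpa using intervalIntegral.integral_comp_sub_right (a := s) (b := t) ω s
    have h1 : F t - F s ≤ ∫ u in s..t, ω (u - s) :=
      intervalIntegral.sub_le_integral_of_hasDeriv_right_of_le hst
        (hFcont.mono hsub)
        (fun x hx => ((hF' x (hsub ⟨hx.1.le, hx.2.le⟩)).hasDerivWithinAt))
        hint (fun x hx => (abs_le.1 (hφ x hx)).2)
    have h2 : (-F) t - (-F) s ≤ ∫ u in s..t, ω (u - s) :=
      intervalIntegral.sub_le_integral_of_hasDeriv_right_of_le hst
        ((hFcont.mono hsub).neg)
        (fun x hx => ((hF' x (hsub ⟨hx.1.le, hx.2.le⟩)).neg.hasDerivWithinAt))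
        hint (fun x hx => by
          have := (abs_le.1 (hφ x hx)).1; simpa using (neg_le.2 this))
    have h1' : F t ≤ ∫ u in s..t, ω (u - s) := by simpa [hF0] using h1
    have h2' : -F t ≤ ∫ u in s..t, ω (u - s) := by simpa [hF0] using h2
    rw [habs, ← hchg]
    show |F t| ≤ _
    exact abs_le.2 ⟨by linarith, h1'⟩
  · -- case t ≤ s
    have habs : |s - t| = s - t := abs_of_nonneg (by linarith)
    have hsub : Set.Icc t s ⊆ Set.Icc (0:ℝ) l :=
      Set.Icc_subset_Icc ht.1 hs.2
    have hanti : AntitoneOn (fun u => ω (s - u)) (Set.Icc t s) := by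
      intro a ha b hb hab
      exact hωmono ⟨by linarith [hb.2], by linarith [hb.1, ht.1, hs.2]⟩
        ⟨by linarith [ha.2], by linarith [ha.1, ht.1, hs.2]⟩ (by linarith)
    have hint : MeasureTheory.IntegrableOn (fun u => ω (s - u)) (Set.Icc t s) :=
      AntitoneOn.integrableOn_isCompact isCompact_Icc hanti
    have hφ : ∀ x ∈ Set.Ioo t s, |F' x| ≤ (fun u => ω (s - u)) x := by
      intro x hx
      have hx' : x ∈ Set.Icc (0:ℝ) l := hsub ⟨hx.1.le, hx.2.le⟩
      have h := hbound x hx'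
      show |F' x| ≤ ω (s - x)
      rwa [abs_sub_comm, _root_.abs_of_nonneg (by linarith [hx.2] : (0:ℝ) ≤ s - x)] at h
    have hchg : (∫ u in t..s, ω (s - u)) = ∫ τ in (0:ℝ)..(s - t), ω τ := by
      simpa using intervalIntegral.integral_comp_sub_left (a := t) (b := s) ω s
    have h1 : F s - F t ≤ ∫ u in t..s, ω (s - u) :=
      intervalIntegral.sub_le_integral_of_hasDeriv_right_of_le hts
        (hFcont.mono hsub)
        (fun x hx => ((hF' x (hsub ⟨hx.1.le, hx.2.le⟩)).hasDerivWithinAt))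
        hint (fun x hx => (abs_le.1 (hφ x hx)).2)
    have h2 : (-F) s - (-F) t ≤ ∫ u in t..s, ω (s - u) :=
      intervalIntegral.sub_le_integral_of_hasDeriv_right_of_le hts
        ((hFcont.mono hsub).neg)
        (fun x hx => ((hF' x (hsub ⟨hx.1.le, hx.2.le⟩)).neg.hasDerivWithinAt))
        hint (fun x hx => by
          have := (abs_le.1 (hφ x hx)).1; simpa using (neg_le.2 this))
    have h1' : -F t ≤ ∫ u in t..s, ω (s - u) := by simpa [hF0] using h1
    have h2' : F t ≤ ∫ u in t..s, ω (s - u) := by simpa [hF0] using h2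
    rw [habs, ← hchg]
    show |F t| ≤ _
    exact abs_le.2 ⟨by linarith, h2'⟩
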